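/- On T³ = (ℝ/2πℤ)³ consider the two maps c(a,b,c) = (b,c,a) and d(a,b,c) = (a, c, −a−b−c). A point t ∈ T³ is fixed by both c and d if and only if t = (x,x,x) with 4x = 0 in ℝ/2πℤ; i.e., the common fixed-point set is exactly the four points (0,0,0), (π/2,π/2,π/2), (π,π,π), (3π/2,3π/2,3π/2). -/
import Mathlib

/-- The momentum torus `T³ = (ℝ/2πℤ)³` of the Gyroid wire network. -/
abbrev GyroidTorus : Type :=
  AddCircle (2 * Real.pi) × AddCircle (2 * Real.pi) × AddCircle (2 * Real.pi)

/-- Lift of the re-gauging induced by the 3-cycle (234): cyclic permutation. -/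
noncomputable def cMap : GyroidTorus → GyroidTorus := fun t => (t.2.1, t.2.2, t.1)

/-- Lift of the re-gauging induced by another 3-cycle of the Gyroid graph. -/
noncomputable def dMap : GyroidTorus → GyroidTorus := fun t => (t.1, t.2.2, -t.1 - t.2.1 - t.2.2)

/-- The diagonal point `(x,x,x)` of the torus for `x : ℝ`. -/
noncomputable def diagPt (x : ℝ) : GyroidTorus :=
  ((x : AddCircle (2 * Real.pi)), (x : AddCircle (2 * Real.pi)), (x : AddCircle (2 * Real.pi)))

lemma per (k : ℤ) : ((k*(2*Real.pi) : ℝ) : AddCircle (2*Real.pi)) = 0 := by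
  rw [AddCircle.coe_eq_zero_iff]; exact ⟨k, by simp [zsmul_eq_mul]⟩

lemma key (x : AddCircle (2*Real.pi)) : (4:ℤ) • x = 0 ↔
    x = ((0:ℝ) : AddCircle (2*Real.pi)) ∨ x = ((Real.pi/2 : ℝ) : AddCircle (2*Real.pi)) ∨
    x = ((Real.pi : ℝ) : AddCircle (2*Real.pi)) ∨ x = ((3*Real.pi/2 : ℝ) : AddCircle (2*Real.pi)) := by
  induction x using QuotientAddGroup.induction_on with
  | H y =>
    constructor
    · intro h
      rw [← AddCircle.coe_zsmul, AddCircle.coe_eq_zero_iff] at h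
      obtain ⟨m, hm⟩ := h
      have hy : y = m * (Real.pi/2) := by
        have h4 : (m:ℝ) * (2*Real.pi) = 4 * y := by
          simpa [zsmul_eq_mul] using hm
        nlinarith [Real.pi_pos]
      obtain ⟨q, r, hqr, hr⟩ : ∃ q r : ℤ, m = 4*q + r ∧ (r = 0 ∨ r = 1 ∨ r = 2 ∨ r = 3) :=
        ⟨m / 4, m % 4, by omega, by omega⟩
      have hsplit : y = r * (Real.pi/2) + q * (2*Real.pi) := by
        rw [hy, hqr]; push_cast; ring
      have hcoe : (y : AddCircle (2*Real.pi)) = ((r * (Real.pi/2) : ℝ) : AddCircle (2*Real.pi)) := by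
        rw [hsplit, AddCircle.coe_add, per, add_zero]
      rcases hr with h | h | h | h <;> subst h <;> rw [hcoe]
      · left; congr 1; push_cast; ring
      · right; left; congr 1; push_cast; ring
      · right; right; left; congr 1; push_cast; ring
      · right; right; right; congr 1; push_cast; ring
    · intro h
      rcases h with h | h | h | h <;> rw [h, ← AddCircle.coe_zsmul]
      · norm_num
      · have : ((4:ℤ):ℝ) * (Real.pi/2) = (1:ℤ) * (2*Real.pi) := by push_cast; ring
        rw [zsmul_eq_mul, this, per]
      · have : ((4:ℤ):ℝ) * Real.pi = (2:ℤ) * (2*Real.pi) := by push_cast; ring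
        rw [zsmul_eq_mul, this, per]
      · have : ((4:ℤ):ℝ) * (3*Real.pi/2) = (3:ℤ) * (2*Real.pi) := by push_cast; ring
        rw [zsmul_eq_mul, this, per]

lemma smul_aux (v : AddCircle (2*Real.pi)) : -v - v - v = v ↔ (4:ℤ) • v = 0 := by
  constructor
  · intro h
    have h6 : (4:ℤ) • v = v - (-v - v - v) := by
      rw [show ((4:ℤ) • v) = v + v + v + v from by abel]; abel
    rw [h6, h, sub_self]
  · intro h
    have h6 : -v - v - v = v - (4:ℤ) • v := by
      rw [show ((4:ℤ) • v) = v + v + v + v from by abel]; abel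
    rw [h6, h, sub_zero]

lemma fix_iff (t : GyroidTorus) :
    (cMap t = t ∧ dMap t = t) ↔
      ∃ x : AddCircle (2 * Real.pi), t = (x, x, x) ∧ (4 : ℤ) • x = 0 := by
  obtain ⟨a, b, c⟩ := t
  simp only [cMap, dMap, Prod.mk.injEq, true_and, and_true, eq_self_iff_true] at *
  constructor
  · rintro ⟨⟨h1, h2, h3⟩, h4, h5⟩
    subst h1 h2
    exact ⟨c, ⟨rfl, rfl, rfl⟩, (smul_aux c).mp h5⟩
  · rintro ⟨x, ⟨ha, hb, hc⟩, hx⟩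
    subst ha hb hc
    exact ⟨⟨rfl, rfl, rfl⟩, rfl, (smul_aux _).mpr hx⟩

theorem stmt12 (t : GyroidTorus) :
    ((cMap t = t ∧ dMap t = t) ↔
      ∃ x : AddCircle (2 * Real.pi), t = (x, x, x) ∧ (4 : ℤ) • x = 0) ∧
    ((cMap t = t ∧ dMap t = t) ↔
      t = diagPt 0 ∨ t = diagPt (Real.pi / 2) ∨ t = diagPt Real.pi ∨
        t = diagPt (3 * Real.pi / 2)) := by
  refine ⟨fix_iff t, (fix_iff t).trans ?_⟩
  constructor
  · rintro ⟨x, rfl, hx⟩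
    rcases (key x).mp hx with h | h | h | h <;> subst h
    · left; rfl
    · right; left; rfl
    · right; right; left; rfl
    · right; right; right; unfold diagPt; norm_num
  · rintro (h | h | h | h) <;> subst h <;>
      refine ⟨_, rfl, (key _).mpr ?_⟩
    · left; rfl
    · right; left; rfl
    · right; right; left; rfl
    · right; right; right; norm_num
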